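/- arXiv:1707.08751 — 6 statements merged into one kernel-verified Lean document; each statement's English description precedes it below -/
import Mathlib

section
/- If a run satisfies T-consistency and Δ-weak growth, then it is T-Δ-acceptable. That is: for all times m ≤ m', agents i, j, and lists X, if honest m i holds, X is a T-prefix of ledger m i, and honest (m' + Δ) j holds, then X is a T-prefix of ledger (m' + Δ) j. -/
/-- `X` is a `T`-prefix of `L`: `X` is a prefix of `L` and `X.length + T ≤ L.length`. -/
def TPrefix {Tx : Type*} (T : ℕ) (X L : List Tx) : Prop :=
  X <+: L ∧ X.length + T ≤ L.length

/-- A run satisfies `T`-consistency. -/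
def TConsistent {Agent Tx : Type*} (T : ℕ) (honest : ℕ → Agent → Prop)
    (ledger : ℕ → Agent → List Tx) : Prop :=
  ∀ (m m' : ℕ) (i j : Agent) (X : List Tx), m ≤ m' → honest m i →
    TPrefix T X (ledger m i) → honest m' j → X <+: ledger m' j

/-- A run satisfies `Δ`-weak growth. -/
def WeakGrowth {Agent Tx : Type*} (Δ : ℕ) (honest : ℕ → Agent → Prop)
    (ledger : ℕ → Agent → List Tx) : Prop :=
  ∀ (m m' : ℕ) (i j : Agent), m + Δ ≤ m' → honest m i → honest m' j →
    (ledger m i).length ≤ (ledger m' j).length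

/-- A run is `T`-`Δ`-acceptable. -/
def Acceptable {Agent Tx : Type*} (T Δ : ℕ) (honest : ℕ → Agent → Prop)
    (ledger : ℕ → Agent → List Tx) : Prop :=
  ∀ (m m' : ℕ) (i j : Agent) (X : List Tx), m ≤ m' → honest m i →
    TPrefix T X (ledger m i) → honest (m' + Δ) j →
    TPrefix T X (ledger (m' + Δ) j)

/-- If a run satisfies `T`-consistency and `Δ`-weak growth, then it is
`T`-`Δ`-acceptable. -/
theorem consistency_and_growth_imply_acceptable {Agent Tx : Type*} (T Δ : ℕ)
    (honest : ℕ → Agent → Prop) (ledger : ℕ → Agent → List Tx)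
    (hcons : TConsistent T honest ledger)
    (hgrow : WeakGrowth Δ honest ledger) :
    Acceptable T Δ honest ledger := by
  intro m m' i j X hmm hi hX hj
  refine ⟨hcons m (m' + Δ) i j X (le_trans hmm (Nat.le_add_right _ _)) hi hX hj, ?_⟩
  exact le_trans hX.2 (hgrow m (m' + Δ) i j (Nat.add_le_add_right hmm Δ) hi hj)
end

section
/- Induction rule for indexical common knowledge: let φ, ψ : Point → Prop. Suppose that for every agent i and every point p, if i ∈ H p and ψ p hold then (Y (E_H (fun q => φ q ∧ ψ q))) p holds. Then for every agent i and every point p, if i ∈ H p and ψ p hold then (C_H^Y φ) p holds. -/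
/-- The simple modal operator induced by the relation `Y`. -/
def Yop {Point : Type*} (Y : Point → Point → Prop) (φ : Point → Prop) (p : Point) : Prop :=
  ∀ q, Y p q → φ q

/-- Belief of agent `i` relative to the indexical set `H`:
`(B_i^H φ) p := ∀ q, q ∼_i p → i ∈ H q → φ q`. -/
def Bop {Point Agent : Type*} (H : Point → Set Agent) (sim : Agent → Point → Point → Prop)
    (i : Agent) (φ : Point → Prop) (p : Point) : Prop :=
  ∀ q, sim i q p → i ∈ H q → φ q

/-- `(E_H φ) p := ∀ i ∈ H p, (B_i^H φ) p`. -/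
def Eop {Point Agent : Type*} (H : Point → Set Agent) (sim : Agent → Point → Point → Prop)
    (φ : Point → Prop) (p : Point) : Prop :=
  ∀ i ∈ H p, Bop H sim i φ p

/-- `(Y∘E_H)^n`, with `(Y∘E_H)^0 = id`, `(Y∘E_H)^{n+1} φ = Y (E_H ((Y∘E_H)^n φ))`. -/
def YEiter {Point Agent : Type*} (H : Point → Set Agent) (sim : Agent → Point → Point → Prop)
    (Y : Point → Point → Prop) : ℕ → (Point → Prop) → (Point → Prop)
  | 0, φ => φ
  | n + 1, φ => Yop Y (Eop H sim (YEiter H sim Y n φ))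

/-- Indexical common knowledge: `(C_H^Y φ) p := ∀ n ≥ 1, ((Y∘E_H)^n φ) p`. -/
def Cop {Point Agent : Type*} (H : Point → Set Agent) (sim : Agent → Point → Point → Prop)
    (Y : Point → Point → Prop) (φ : Point → Prop) (p : Point) : Prop :=
  ∀ n, 1 ≤ n → YEiter H sim Y n φ p

/-- A single `(H-Y)`-reachability step: there are an agent `i` and a point `p'` with
`Y p p'`, `i ∈ H p'`, `i ∈ H q`, and `q ∼_i p'`. -/
def Step {Point Agent : Type*} (H : Point → Set Agent) (sim : Agent → Point → Point → Prop)
    (Y : Point → Point → Prop) (p q : Point) : Prop :=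
  ∃ (i : Agent) (p' : Point), Y p p' ∧ i ∈ H p' ∧ i ∈ H q ∧ sim i q p'

/-- `q` is `(H-Y)`-reachable from `p` in `k` steps. -/
def ReachN {Point Agent : Type*} (H : Point → Set Agent) (sim : Agent → Point → Point → Prop)
    (Y : Point → Point → Prop) : ℕ → Point → Point → Prop
  | 0, p, q => p = q
  | k + 1, p, q => ∃ mid, Step H sim Y p mid ∧ ReachN H sim Y k mid q

/-- Induction rule for indexical common knowledge. -/
theorem induction_rule {Point Agent : Type*} (H : Point → Set Agent)
    (sim : Agent → Point → Point → Prop) (Y : Point → Point → Prop)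
    (φ ψ : Point → Prop)
    (hyp : ∀ (i : Agent) (p : Point), i ∈ H p → ψ p →
      Yop Y (Eop H sim (fun q => φ q ∧ ψ q)) p) :
    ∀ (i : Agent) (p : Point), i ∈ H p → ψ p → Cop H sim Y φ p := by
  have key : ∀ n (i : Agent) (p : Point), i ∈ H p → ψ p →
      YEiter H sim Y (n + 1) φ p := by
    intro n
    induction n with
    | zero =>
      intro i p hi hp q hYq j hj r hr hjr
      exact ((hyp i p hi hp q hYq j hj r hr hjr).1)
    | succ n ih =>
      intro i p hi hp q hYq j hj r hr hjr
      obtain ⟨h1, h2⟩ := hyp i p hi hp q hYq j hj r hr hjr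
      exact ih j r hjr h2
  intro i p hi hp n hn
  obtain ⟨m, rfl⟩ := Nat.exists_eq_add_of_le hn
  rw [Nat.add_comm]
  exact key m i p hi hp
end

section
/- For every k ≥ 1, every predicate φ : Point → Prop, and every point p: ((Y∘E_H)^k φ) p holds if and only if φ q holds for every point q that is (H-Y)-reachable in k steps from p. -/
/-- `((Y∘E_H)^k φ) p` holds iff `φ q` holds for every point `q` that is
`(H-Y)`-reachable in `k` steps from `p`, for every `k ≥ 1`. -/
theorem iter_iff_reach {Point Agent : Type*} (H : Point → Set Agent)
    (sim : Agent → Point → Point → Prop) (Y : Point → Point → Prop) :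
    ∀ k, 1 ≤ k → ∀ (φ : Point → Prop) (p : Point),
      YEiter H sim Y k φ p ↔ ∀ q, ReachN H sim Y k p q → φ q := by
  have main : ∀ k (φ : Point → Prop) (p : Point),
      YEiter H sim Y (k + 1) φ p ↔ ∀ q, ReachN H sim Y (k + 1) p q → φ q := by
    intro k
    induction k with
    | zero =>
      intro φ p
      constructor
      · rintro h q ⟨mid, ⟨i, p', hY, hp', hq, hsim⟩, hm⟩
        subst hm
        exact h p' hY i hp' mid hsim hq
      · intro h p' hY i hi q hsim hq
        exact h q ⟨q, ⟨i, p', hY, hi, hq, hsim⟩, rfl⟩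
    | succ k ih =>
      intro φ p
      constructor
      · rintro h q ⟨mid, ⟨i, p', hY, hp', hmid, hsim⟩, hr⟩
        exact (ih φ mid).mp (h p' hY i hp' mid hsim hmid) q hr
      · intro h p' hY i hi m hsim hm
        exact (ih φ m).mpr fun q hr => h q ⟨m, ⟨i, p', hY, hi, hm, hsim⟩, hr⟩
  intro k hk φ p
  obtain ⟨k, rfl⟩ := Nat.exists_eq_add_of_le hk
  rw [Nat.add_comm]
  exact main k φ p
end

section
/- For every predicate φ : Point → Prop and every point p: (C_H^Y φ) p holds if and only if φ q holds for every point q that is (H-Y)-reachable in k steps from p for some k ≥ 1. -/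

theorem YEiter_iff {Point Agent : Type*} (H : Point → Set Agent)
    (sim : Agent → Point → Point → Prop) (Y : Point → Point → Prop)
    (φ : Point → Prop) : ∀ n p, YEiter H sim Y n φ p ↔ ∀ q, ReachN H sim Y n p q → φ q := by
  intro n
  induction n with
  | zero => intro p; constructor
            · rintro h q rfl; exact h
            · intro h; exact h p rfl
  | succ k ih =>
    intro p
    constructor
    · rintro h q ⟨mid, ⟨i, p', hY, hi', hi, hs⟩, hr⟩
      exact (ih mid).1 (h p' hY i hi' mid hs hi) q hr
    · intro h p' hY i hi' q hs hi
      exact (ih q).2 (fun r hr => h r ⟨q, ⟨i, p', hY, hi', hi, hs⟩, hr⟩)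

/-- `(C_H^Y φ) p` holds iff `φ q` holds for every point `q` that is
`(H-Y)`-reachable in `k` steps from `p` for some `k ≥ 1`. -/
theorem commonKnowledge_iff_reach {Point Agent : Type*} (H : Point → Set Agent)
    (sim : Agent → Point → Point → Prop) (Y : Point → Point → Prop)
    (φ : Point → Prop) (p : Point) :
    Cop H sim Y φ p ↔ ∀ q, (∃ k, 1 ≤ k ∧ ReachN H sim Y k p q) → φ q := by
  constructor
  · rintro h q ⟨k, hk, hr⟩
    exact (YEiter_iff H sim Y φ k p).1 (h k hk) q hr
  · intro h n hn
    exact (YEiter_iff H sim Y φ n p).2 (fun q hq => h q ⟨n, hn, hq⟩)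
end

section
/- Suppose φ, ψ : Point → Prop are such that for every agent i and point p, i ∈ H p and ψ p imply (Y (E_H (fun q => φ q ∧ ψ q))) p. Then for every agent i, every point p with i ∈ H p and ψ p, every k ≥ 1, and every point q that is (H-Y)-reachable in k steps from p, both φ q and ψ q hold. -/
/-- If `i ∈ H p` and `ψ p` imply `(Y (E_H (φ ∧ ψ))) p` for all `i, p`, then from any
point `p` with `i ∈ H p` and `ψ p`, every point `q` that is `(H-Y)`-reachable in
`k ≥ 1` steps from `p` satisfies both `φ q` and `ψ q`. -/
theorem reach_of_induction_hyp {Point Agent : Type*} (H : Point → Set Agent)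
    (sim : Agent → Point → Point → Prop) (Y : Point → Point → Prop)
    (φ ψ : Point → Prop)
    (hyp : ∀ (i : Agent) (p : Point), i ∈ H p → ψ p →
      Yop Y (Eop H sim (fun q => φ q ∧ ψ q)) p) :
    ∀ (i : Agent) (p : Point), i ∈ H p → ψ p →
      ∀ k, 1 ≤ k → ∀ q, ReachN H sim Y k p q → φ q ∧ ψ q := by
  have main : ∀ k (i : Agent) (p : Point), i ∈ H p → ψ p →
      ∀ q, ReachN H sim Y (k + 1) p q → φ q ∧ ψ q := by
    intro k
    induction k with
    | zero =>
      rintro i p hi hψ q ⟨mid, ⟨j, p', hY, hjp', hjm, hsim⟩, rfl⟩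
      exact hyp i p hi hψ p' hY j hjp' mid hsim hjm
    | succ k ih =>
      rintro i p hi hψ q ⟨mid, hstep, hr⟩
      obtain ⟨j, p', hY, hjp', hjm, hsim⟩ := hstep
      have hmid : φ mid ∧ ψ mid := hyp i p hi hψ p' hY j hjp' mid hsim hjm
      exact ih j mid hjm hmid.2 q hr
  intro i p hi hψ k hk q hr
  obtain ⟨k, rfl⟩ := Nat.exists_eq_add_of_le hk
  exact main k i p hi hψ q (by simpa [Nat.add_comm] using hr)
end

section
/- T-consistency alone does not imply T-Δ-acceptability: for every T ≥ 1 there exist a type Agent (with at least two agents), a type Tx, and a run (honest, ledger) that satisfies T-consistency but, for every Δ : ℕ, is not T-Δ-acceptable. -/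
/-- `T`-consistency alone does not imply `T`-`Δ`-acceptability: for every `T ≥ 1`
there are a type of agents (with at least two agents), a type of transactions, and a
run satisfying `T`-consistency that is not `T`-`Δ`-acceptable for any `Δ`. -/
theorem consistency_not_sufficient :
    ∀ T : ℕ, 1 ≤ T →
      ∃ (Agent : Type) (_ : Nontrivial Agent) (Tx : Type)
        (honest : ℕ → Agent → Prop) (ledger : ℕ → Agent → List Tx),
        TConsistent T honest ledger ∧
          ∀ Δ : ℕ, ¬ Acceptable T Δ honest ledger := by
  intro T hT
  refine ⟨Bool, inferInstance, Unit, fun _ _ => True,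
    fun m _ => if m = 0 then List.replicate T () else [], ?_, ?_⟩
  · intro m m' i j X _ _ hX _
    rcases hX with ⟨hpre, hlen⟩
    have hX0 : X = [] := by
      by_cases hm : m = 0
      · simp only [if_pos hm, List.length_replicate] at hlen
        exact List.eq_nil_of_length_eq_zero (by omega)
      · simp only [if_neg hm, List.length_nil] at hlen
        exact List.eq_nil_of_length_eq_zero (by omega)
    simp [hX0]
  · intro Δ hacc
    have := hacc 0 1 true true [] (by norm_num) trivial
      ⟨List.nil_prefix, by simp⟩ trivial
    rcases this with ⟨_, hlen⟩
    simp at hlen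
    omega
end
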